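/- For every a > 0 and ε > 0, the function f_{ε,a} : ℝ² → ℝ defined by f_{ε,a}(x₁,x₂) = F(√(x₁²+x₂²)) + (ε/2)·((x₁ − a)₊)² is convex and continuously differentiable on ℝ², its gradient vanishes at the origin, and the origin is its unique minimizer. -/

import Mathlib

/-- `F(0) = 0`, `F(r) = ∫₀^r du/(−log u)` for `0 < r ≤ e⁻²`,
`F(r) = F(e⁻²) + (1/2)(r − e⁻²)` for `r ≥ e⁻²`. -/
noncomputable def F (r : ℝ) : ℝ :=
  if r ≤ Real.exp (-2) then ∫ u in (0:ℝ)..r, 1 / (-Real.log u)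
  else (∫ u in (0:ℝ)..Real.exp (-2), 1 / (-Real.log u)) + (1/2) * (r - Real.exp (-2))

/-- `f_{ε,a}(x₁,x₂) = F(√(x₁²+x₂²)) + (ε/2)·((x₁ − a)₊)²`. -/
noncomputable def feps (ε a : ℝ) (x : EuclideanSpace ℝ (Fin 2)) : ℝ :=
  F (Real.sqrt ((x 0)^2 + (x 1)^2)) + (ε/2) * (max (x 0 - a) 0)^2

open Real MeasureTheory intervalIntegral Set Filter Topology Asymptotics

noncomputable def phi (u : ℝ) : ℝ := if u ≤ Real.exp (-2) then 1 / (-Real.log u) else 1/2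

abbrev E2 := EuclideanSpace ℝ (Fin 2)

noncomputable def D (x : E2) : E2 →L[ℝ] ℝ := (phi ‖x‖ * ‖x‖⁻¹) • innerSL ℝ x


lemma e2pos : (0:ℝ) < Real.exp (-2) := Real.exp_pos _
lemma e2lt1 : Real.exp (-2:ℝ) < 1 := by
  rw [Real.exp_lt_one_iff]; norm_num

lemma log_le_of_le_e2 {u : ℝ} (h0 : 0 < u) (h : u ≤ Real.exp (-2)) : Real.log u ≤ -2 := by
  have := Real.log_le_log h0 h
  simpa [Real.log_exp] using this

lemma phi_mem {u : ℝ} (hu : -Real.exp (-2) ≤ u) : phi u ∈ Icc (0:ℝ) (1/2) := by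
  unfold phi
  split_ifs with h
  · rcases lt_trichotomy u 0 with hneg | rfl | hpos
    · have h1 : 0 < -u := by linarith
      have h2 : -u ≤ Real.exp (-2) := by linarith
      have hl : Real.log u = Real.log (-u) := by
        rw [← Real.log_neg_eq_log]
      have := log_le_of_le_e2 h1 h2
      rw [hl]
      have hpos2 : 0 < -Real.log (-u) := by linarith
      constructor
      · positivity
      · rw [div_le_iff₀ (by linarith)]; linarith
    · simp [Real.log_zero]
    · have := log_le_of_le_e2 hpos h
      have hpos2 : 0 < -Real.log u := by linarith
      constructor
      · positivity
      · rw [div_le_iff₀ (by linarith)]; linarith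
  · simp

lemma phi_pos {u : ℝ} (hu : 0 < u) : 0 < phi u := by
  unfold phi
  split_ifs with h
  · have := log_le_of_le_e2 hu h
    have hpos2 : 0 < -Real.log u := by linarith
    positivity
  · norm_num


lemma phi_measurable : Measurable phi := by
  unfold phi
  exact Measurable.ite (measurableSet_le measurable_id measurable_const)
    (Measurable.div measurable_const Real.measurable_log.neg) measurable_const

lemma phi_intInt {r s : ℝ} (hr : -Real.exp (-2) ≤ r) (hs : -Real.exp (-2) ≤ s) :
    IntervalIntegrable phi volume r s := by
  apply IntervalIntegrable.mono_fun' (g := fun _ => (1/2:ℝ)) intervalIntegrable_const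
    (phi_measurable.aestronglyMeasurable.restrict)
  rw [Filter.EventuallyLE, MeasureTheory.ae_restrict_iff' measurableSet_uIoc]
  apply Filter.Eventually.of_forall
  intro u hu
  have h1 : -Real.exp (-2) ≤ u := by
    rcases le_total r s with h | h
    · rw [Set.uIoc_of_le h] at hu; linarith [hu.1]
    · rw [Set.uIoc_of_ge h] at hu; linarith [hu.1]
  obtain ⟨h2, h3⟩ := phi_mem h1
  simp only [Real.norm_eq_abs, abs_of_nonneg h2]
  exact h3

lemma F_eq_aux {r : ℝ} (hr : r ≤ Real.exp (-2)) :
    (∫ u in (0:ℝ)..r, 1 / (-Real.log u)) = ∫ u in (0:ℝ)..r, phi u := by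
  apply intervalIntegral.integral_congr
  intro u hu
  have : u ≤ Real.exp (-2) := by
    rcases Set.mem_uIcc.1 hu with ⟨h1, h2⟩ | ⟨h1, h2⟩
    · linarith
    · linarith [Real.exp_pos (-2:ℝ)]
  simp [phi, this]


lemma phi_eq_min {u : ℝ} (h0 : 0 < u) (h1 : u < 1) :
    phi u = min (1 / (-Real.log u)) (1/2) := by
  have hlog : Real.log u < 0 := Real.log_neg h0 h1
  unfold phi
  split_ifs with h
  · have h2 : Real.log u ≤ -2 := by
      have := Real.log_le_log h0 h
      simpa [Real.log_exp] using this
    rw [min_eq_left]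
    rw [div_le_div_iff₀ (by linarith) (by norm_num)]
    linarith
  · push_neg at h
    have h2 : -2 < Real.log u := by
      have := Real.log_lt_log (Real.exp_pos _) h
      simpa [Real.log_exp] using this
    rw [min_eq_right]
    rw [div_le_div_iff₀ (by norm_num) (by linarith)]
    linarith

lemma phi_continuousAt {r : ℝ} (hr : 0 ≤ r) : ContinuousAt phi r := by
  rcases eq_or_lt_of_le hr with rfl | hr
  · -- at 0
    have hev : Tendsto phi (𝓝[≠] (0:ℝ)) (𝓝 0) := by
      have hlog : Tendsto (fun u => -Real.log u) (𝓝[≠] (0:ℝ)) atTop :=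
        tendsto_neg_atBot_atTop.comp Real.tendsto_log_nhdsNE_zero
      have : Tendsto (fun u => 1 / (-Real.log u)) (𝓝[≠] (0:ℝ)) (𝓝 0) := by
        exact hlog.inv_tendsto_atTop.congr (fun u => by simp [one_div])
      apply this.congr'
      filter_upwards [nhdsWithin_le_nhds (eventually_abs_sub_lt 0 (Real.exp_pos (-2)))] with u hu
      have : u ≤ Real.exp (-2) := by rw [sub_zero] at hu; cases abs_lt.1 hu; linarith
      simp [phi, this]
    have h0 : phi 0 = 0 := by simp [phi, Real.log_zero, (Real.exp_pos (-2:ℝ)).le]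
    have hp : Tendsto phi (pure (0:ℝ)) (𝓝 0) := by
      simpa [h0] using tendsto_pure_nhds phi (0:ℝ)
    have := hev.sup hp
    rw [nhdsNE_sup_pure (0:ℝ)] at this
    rw [ContinuousAt, h0]
    exact this
  · rcases lt_or_ge r 1 with hr1 | hr1
    · -- use min formula on (0,1)
      have hev : ∀ᶠ u in 𝓝 r, phi u = min (1 / (-Real.log u)) (1/2) := by
        filter_upwards [Ioo_mem_nhds hr hr1] with u hu
        exact phi_eq_min hu.1 hu.2
      rw [continuousAt_congr hev]
      have hlog : Real.log r < 0 := Real.log_neg hr hr1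
      have hc : ContinuousAt (fun u => 1 / (-Real.log u)) r := by
        apply ContinuousAt.div continuousAt_const ((Real.continuousAt_log (ne_of_gt hr)).neg)
        exact ne_of_gt (by show 0 < -Real.log r; linarith)
      exact hc.min continuousAt_const
    · -- r ≥ 1 > e⁻² : locally constant 1/2
      have hev : ∀ᶠ u in 𝓝 r, phi u = 1/2 := by
        filter_upwards [eventually_gt_nhds (lt_of_lt_of_le e2lt1 hr1)] with u hu
        simp [phi, not_le.2 hu]
      rw [continuousAt_congr hev]
      exact continuousAt_const


lemma phi_eq_half {u : ℝ} (hu : Real.exp (-2) ≤ u) : phi u = 1/2 := by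
  unfold phi
  split_ifs with h
  · have : u = Real.exp (-2) := le_antisymm h hu
    rw [this, Real.log_exp]; norm_num
  · rfl

lemma F_eq (r : ℝ) : F r = ∫ u in (0:ℝ)..r, phi u := by
  unfold F
  split_ifs with h
  · exact F_eq_aux h
  · push_neg at h
    have he : (0:ℝ) < Real.exp (-2) := Real.exp_pos _
    have i1 : IntervalIntegrable phi volume 0 (Real.exp (-2)) := phi_intInt (by linarith) (by linarith)
    have i2 : IntervalIntegrable phi volume (Real.exp (-2)) r := phi_intInt (by linarith) (by linarith)
    rw [← intervalIntegral.integral_add_adjacent_intervals i1 i2]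
    rw [F_eq_aux le_rfl]
    congr 1
    rw [intervalIntegral.integral_congr (g := fun _ => (1/2:ℝ))]
    · simp [smul_eq_mul]; ring
    · intro u hu
      rw [Set.uIcc_of_le h.le] at hu
      exact phi_eq_half hu.1

lemma F_zero : F 0 = 0 := by rw [F_eq]; simp

lemma hasDerivAt_F {r : ℝ} (hr : 0 ≤ r) : HasDerivAt F (phi r) r := by
  have : HasDerivAt (fun s => ∫ u in (0:ℝ)..s, phi u) (phi r) r := by
    apply intervalIntegral.integral_hasDerivAt_right
      (phi_intInt (by linarith [Real.exp_pos (-2:ℝ)]) (by linarith [Real.exp_pos (-2:ℝ)]))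
      phi_measurable.stronglyMeasurable.stronglyMeasurableAtFilter
      (phi_continuousAt hr)
  exact this.congr_of_eventuallyEq (Filter.Eventually.of_forall fun s => (F_eq s))

lemma phi_monotoneOn : MonotoneOn phi (Set.Ici 0) := by
  intro u hu v hv huv
  rcases le_or_gt v (Real.exp (-2)) with hv2 | hv2
  · rcases eq_or_lt_of_le (Set.mem_Ici.1 hu : (0:ℝ) ≤ u) with rfl | hu0
    · have h0 : phi 0 = 0 := by simp [phi, Real.log_zero, (Real.exp_pos (-2:ℝ)).le]
      rw [h0]
      exact (phi_mem (by linarith [Real.exp_pos (-2:ℝ), hv.out])).1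
    · have hu2 : u ≤ Real.exp (-2) := le_trans huv hv2
      have hlu : Real.log u ≤ -2 := by
        have := Real.log_le_log hu0 hu2
        simpa [Real.log_exp] using this
      have hlv : Real.log v ≤ -2 := by
        have := Real.log_le_log (lt_of_lt_of_le hu0 huv) hv2
        simpa [Real.log_exp] using this
      have hlog : Real.log u ≤ Real.log v := Real.log_le_log hu0 huv
      simp only [phi, if_pos hu2, if_pos hv2]
      apply one_div_le_one_div_of_le (by linarith)
      linarith
  · have h2 : phi v = 1/2 := phi_eq_half hv2.le
    rw [h2]
    exact (phi_mem (le_trans (by linarith [Real.exp_pos (-2:ℝ)]) (Set.mem_Ici.1 hu))).2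

lemma F_pos {r : ℝ} (hr : 0 < r) : 0 < F r := by
  rw [F_eq]
  apply intervalIntegral.intervalIntegral_pos_of_pos_on
    (phi_intInt (by linarith [Real.exp_pos (-2:ℝ)]) (by linarith [Real.exp_pos (-2:ℝ)]))
    (fun u hu => phi_pos hu.1) hr

lemma F_le {r : ℝ} (hr : 0 ≤ r) : F r ≤ r * phi r := by
  rw [F_eq]
  have he : (0:ℝ) < Real.exp (-2) := Real.exp_pos _
  calc (∫ u in (0:ℝ)..r, phi u) ≤ ∫ _u in (0:ℝ)..r, phi r := by
        apply intervalIntegral.integral_mono_on hr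
          (phi_intInt (by linarith) (by linarith)) intervalIntegrable_const
        intro u hu
        exact phi_monotoneOn hu.1 (le_trans hu.1 hu.2 : (0:ℝ) ≤ r) hu.2
    _ = r * phi r := by simp

lemma F_nonneg {r : ℝ} (hr : 0 ≤ r) : 0 ≤ F r := by
  rcases eq_or_lt_of_le hr with rfl | h
  · rw [F_zero]
  · exact (F_pos h).le

lemma F_monotoneOn : MonotoneOn F (Set.Ici 0) := by
  intro u hu v hv huv
  have he : (0:ℝ) < Real.exp (-2) := Real.exp_pos _
  have i1 : IntervalIntegrable phi volume 0 u := phi_intInt (by linarith) (by linarith [hu.out])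
  have i2 : IntervalIntegrable phi volume u v := phi_intInt (by linarith [hu.out]) (by linarith [hv.out])
  rw [F_eq, F_eq, ← intervalIntegral.integral_add_adjacent_intervals i1 i2]
  have : 0 ≤ ∫ x in u..v, phi x := by
    apply intervalIntegral.integral_nonneg huv
    intro x hx
    exact (phi_mem (by linarith [hx.1, hu.out])).1
  linarith


lemma phi_zero : phi 0 = 0 := by simp [phi, Real.log_zero, (Real.exp_pos (-2:ℝ)).le]

lemma contAt_phinorm (x : E2) : ContinuousAt (fun y : E2 => phi ‖y‖) x :=
  ContinuousAt.comp (phi_continuousAt (norm_nonneg x)) continuous_norm.continuousAt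

lemma phi_nonneg' (x : E2) : 0 ≤ phi ‖x‖ :=
  (phi_mem (le_trans (by linarith [Real.exp_pos (-2:ℝ)]) (norm_nonneg x))).1

lemma hasFDerivAt_norm {x : E2} (hx : x ≠ 0) :
    HasFDerivAt (fun y : E2 => ‖y‖) (‖x‖⁻¹ • innerSL ℝ x) x := by
  have hxn : (0:ℝ) < ‖x‖ := norm_pos_iff.2 hx
  have h1 : HasFDerivAt (fun y : E2 => ‖y‖^2) ((2:ℕ) • innerSL ℝ x) x :=
    (hasStrictFDerivAt_norm_sq x).hasFDerivAt
  have h2 : HasFDerivAt (fun y : E2 => Real.sqrt (‖y‖^2))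
      ((1 / (2 * Real.sqrt (‖x‖^2))) • ((2:ℕ) • innerSL ℝ x)) x := h1.sqrt (by positivity)
  have h3 : (fun y : E2 => Real.sqrt (‖y‖^2)) = fun y : E2 => ‖y‖ := by
    funext y; exact Real.sqrt_sq (norm_nonneg y)
  rw [h3] at h2
  convert h2 using 1
  ext y
  simp only [ContinuousLinearMap.coe_smul', Pi.smul_apply, smul_eq_mul,
    Real.sqrt_sq (norm_nonneg x), nsmul_eq_mul, Nat.cast_ofNat]
  field_simp
  simp only [Pi.mul_apply, Pi.ofNat_apply]
  ring

lemma hasFDerivAt_G (x : E2) : HasFDerivAt (fun y : E2 => F ‖y‖) (D x) x := by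
  rcases eq_or_ne x 0 with rfl | hx
  · have hD : D (0:E2) = 0 := by simp [D]
    rw [hD]
    rw [hasFDerivAt_iff_isLittleO_nhds_zero]
    rw [Asymptotics.isLittleO_iff]
    intro c hc
    have hcont := contAt_phinorm 0
    have h1 : ∀ᶠ y : E2 in 𝓝 0, phi ‖y‖ < c := by
      have ht : Tendsto (fun y : E2 => phi ‖y‖) (𝓝 0) (𝓝 0) := by
        simpa [phi_zero] using hcont.tendsto
      exact ht.eventually_lt_const hc
    filter_upwards [h1] with y hy
    simp only [norm_zero, F_zero, ContinuousLinearMap.zero_apply, zero_add, sub_zero]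
    rw [Real.norm_eq_abs, abs_of_nonneg (F_nonneg (norm_nonneg y))]
    calc F ‖y‖ ≤ ‖y‖ * phi ‖y‖ := F_le (norm_nonneg y)
      _ ≤ c * ‖y‖ := by
          rw [mul_comm]
          exact mul_le_mul_of_nonneg_right hy.le (norm_nonneg y)
  · have h := (hasDerivAt_F (norm_nonneg x)).comp_hasFDerivAt x (hasFDerivAt_norm hx)
    refine h.congr_fderiv ?_
    unfold D
    rw [smul_smul]

lemma norm_D_le (x : E2) : ‖D x‖ ≤ phi ‖x‖ := by
  rcases eq_or_ne x 0 with rfl | hx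
  · simp [D, phi_zero]
  · have hxn : (0:ℝ) < ‖x‖ := norm_pos_iff.2 hx
    have hnn : (0:ℝ) ≤ phi ‖x‖ * ‖x‖⁻¹ := by
      have := phi_nonneg' x
      positivity
    unfold D
    rw [norm_smul (phi ‖x‖ * ‖x‖⁻¹) (innerSL ℝ x), innerSL_apply_norm, Real.norm_eq_abs, abs_of_nonneg hnn,
      mul_assoc, inv_mul_cancel₀ (ne_of_gt hxn), mul_one]

lemma continuous_D : Continuous D := by
  rw [continuous_iff_continuousAt]
  intro x
  rcases eq_or_ne x 0 with rfl | hx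
  · have hD0 : D (0:E2) = 0 := by simp [D]
    rw [ContinuousAt, hD0]
    apply squeeze_zero_norm norm_D_le
    have := (contAt_phinorm 0).tendsto
    simpa [phi_zero] using this
  · have hxn : (0:ℝ) < ‖x‖ := norm_pos_iff.2 hx
    apply ContinuousAt.fun_smul
    · exact ContinuousAt.mul (contAt_phinorm x)
        ((continuous_norm.continuousAt).inv₀ (ne_of_gt hxn))
    · exact (innerSL ℝ (E := E2)).continuous.continuousAt

lemma contDiff_G : ContDiff ℝ 1 (fun y : E2 => F ‖y‖) := by
  rw [contDiff_one_iff_fderiv]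
  constructor
  · exact fun x => (hasFDerivAt_G x).differentiableAt
  · have : (fderiv ℝ fun y : E2 => F ‖y‖) = D := funext fun x => (hasFDerivAt_G x).fderiv
    rw [this]
    exact continuous_D


lemma hasDerivAt_q (a t : ℝ) :
    HasDerivAt (fun s => (max (s - a) 0)^2) (2 * max (t - a) 0) t := by
  rcases lt_trichotomy t a with h | rfl | h
  · have hev : (fun s => (max (s - a) 0)^2) =ᶠ[𝓝 t] fun _ => (0:ℝ) := by
      filter_upwards [eventually_lt_nhds h] with s hs
      rw [max_eq_right (by linarith)]
      norm_num
    rw [max_eq_right (by linarith), mul_zero]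
    exact (hasDerivAt_const t (0:ℝ)).congr_of_eventuallyEq hev
  · rw [sub_self, max_self, mul_zero]
    rw [hasDerivAt_iff_isLittleO, Asymptotics.isLittleO_iff]
    intro c hc
    filter_upwards [eventually_abs_sub_lt t hc] with s hs
    simp only [sub_self, max_self, ne_eq, OfNat.ofNat_ne_zero, not_false_eq_true, zero_pow,
      smul_eq_mul, mul_zero, sub_zero]
    rw [Real.norm_eq_abs, abs_of_nonneg (by positivity : (0:ℝ) ≤ (max (s - t) 0)^2)]
    have h1 : max (s - t) 0 ≤ |s - t| := by
      apply max_le (le_abs_self _) (abs_nonneg _)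
    calc (max (s - t) 0)^2 ≤ |s - t|^2 := by
          apply pow_le_pow_left₀ (le_max_right _ _) h1
      _ = |s - t| * |s - t| := sq (|s - t|) ▸ by ring
      _ ≤ c * |s - t| := by
          apply mul_le_mul_of_nonneg_right hs.le (abs_nonneg _)
      _ = c * ‖s - t‖ := by rw [Real.norm_eq_abs]
  · have hev : (fun s => (max (s - a) 0)^2) =ᶠ[𝓝 t] fun s => (s - a)^2 := by
      filter_upwards [eventually_gt_nhds h] with s hs
      rw [max_eq_left (by linarith)]
    rw [max_eq_left (by linarith)]
    have hd : HasDerivAt (fun s : ℝ => (s - a)^2) (2 * (t - a)) t := by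
      have := ((hasDerivAt_id t).sub_const a).fun_pow 2
      simpa using this
    exact hd.congr_of_eventuallyEq hev

lemma contDiff_q (a : ℝ) : ContDiff ℝ 1 (fun s : ℝ => (max (s - a) 0)^2) := by
  rw [contDiff_one_iff_deriv]
  refine ⟨fun t => (hasDerivAt_q a t).differentiableAt, ?_⟩
  have : deriv (fun s : ℝ => (max (s - a) 0)^2) = fun t => 2 * max (t - a) 0 :=
    funext fun t => (hasDerivAt_q a t).deriv
  rw [this]
  exact continuous_const.mul ((continuous_id.sub continuous_const).max continuous_const)


lemma convexOn_comp_helper {g : ℝ → ℝ} {f : E2 → ℝ}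
    (hg : ConvexOn ℝ (Set.Ici 0) g) (hgm : MonotoneOn g (Set.Ici 0))
    (hf : ConvexOn ℝ Set.univ f) (hf0 : ∀ x, 0 ≤ f x) :
    ConvexOn ℝ Set.univ (fun x => g (f x)) := by
  refine ⟨convex_univ, fun x _ y _ p q hp hq hpq => ?_⟩
  have h1 : f (p • x + q • y) ≤ p * f x + q * f y := by
    simpa using hf.2 (Set.mem_univ x) (Set.mem_univ y) hp hq hpq
  have h2 : (0:ℝ) ≤ p * f x + q * f y := by
    have := hf0 x; have := hf0 y; positivity
  calc g (f (p • x + q • y)) ≤ g (p * f x + q * f y) :=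
        hgm (hf0 _) h2 h1
    _ ≤ p • g (f x) + q • g (f y) := by
        simpa using hg.2 (hf0 x) (hf0 y) hp hq hpq

lemma convexOn_F : ConvexOn ℝ (Set.Ici 0) F := by
  apply MonotoneOn.convexOn_of_deriv (convex_Ici 0)
  · intro r hr
    exact (hasDerivAt_F hr).continuousAt.continuousWithinAt
  · intro r hr
    rw [interior_Ici] at hr
    exact ((hasDerivAt_F (le_of_lt hr)).differentiableAt).differentiableWithinAt
  · intro u hu v hv huv
    rw [interior_Ici] at hu hv
    rw [(hasDerivAt_F hu.le).deriv, (hasDerivAt_F hv.le).deriv]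
    exact phi_monotoneOn (Set.mem_Ici.2 (le_of_lt hu)) (Set.mem_Ici.2 (le_of_lt hv)) huv

lemma convexOn_G : ConvexOn ℝ Set.univ (fun x : E2 => F ‖x‖) :=
  convexOn_comp_helper convexOn_F F_monotoneOn convexOn_univ_norm (fun x => norm_nonneg x)

lemma convexOn_m (a : ℝ) : ConvexOn ℝ Set.univ (fun x : E2 => max (x 0 - a) 0) := by
  refine ⟨convex_univ, fun x _ y _ p q hp hq hpq => ?_⟩
  have hxy : (p • x + q • y) 0 = p * x 0 + q * y 0 := by
    simp [PiLp.add_apply, PiLp.smul_apply, smul_eq_mul]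
  simp only [smul_eq_mul, hxy]
  apply max_le
  · have e1 : p * x 0 + q * y 0 - a = p * (x 0 - a) + q * (y 0 - a) := by
      have h1 : p + q = 1 := hpq
      linear_combination a * h1
    rw [e1]
    apply add_le_add
    · exact mul_le_mul_of_nonneg_left (le_max_left _ _) hp
    · exact mul_le_mul_of_nonneg_left (le_max_left _ _) hq
  · positivity

lemma convexOn_msq (a : ℝ) : ConvexOn ℝ Set.univ (fun x : E2 => (max (x 0 - a) 0)^2) := by
  apply convexOn_comp_helper (g := fun t => t^2)
  · exact convexOn_pow 2
  · intro u hu v hv huv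
    exact pow_le_pow_left₀ hu huv 2
  · exact convexOn_m a
  · intro x; positivity


lemma sqrt_eq_norm (x : E2) : Real.sqrt ((x 0)^2 + (x 1)^2) = ‖x‖ := by
  rw [EuclideanSpace.norm_eq]
  congr 1
  rw [Fin.sum_univ_two]
  simp [sq_abs]

lemma feps_eq (ε a : ℝ) :
    feps ε a = fun x : E2 => F ‖x‖ + (ε/2) * (max (x 0 - a) 0)^2 := by
  funext x
  rw [feps, sqrt_eq_norm]

lemma abs_apply_le_norm (x : E2) : |x 0| ≤ ‖x‖ := by
  rw [← sqrt_eq_norm, ← Real.sqrt_sq_eq_abs]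
  apply Real.sqrt_le_sqrt
  nlinarith [sq_nonneg (x 1)]

/-- For every `a > 0` and `ε > 0`, the function `f_{ε,a}` is convex and
continuously differentiable on `ℝ²`, its gradient vanishes at the origin, and the origin
is its unique minimizer. -/
theorem feps_convex_C1_unique_minimizer (a ε : ℝ) (ha : 0 < a) (hε : 0 < ε) :
    ConvexOn ℝ Set.univ (feps ε a) ∧
    ContDiff ℝ 1 (feps ε a) ∧
    gradient (feps ε a) 0 = 0 ∧
    (∀ x : EuclideanSpace ℝ (Fin 2), x ≠ 0 → feps ε a 0 < feps ε a x) := by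
  rw [feps_eq]
  have hproj : ContDiff ℝ 1 (fun x : E2 => x 0) := (EuclideanSpace.proj (0 : Fin 2) : E2 →L[ℝ] ℝ).contDiff
  refine ⟨?_, ?_, ?_, ?_⟩
  · -- convexity
    apply ConvexOn.add convexOn_G
    have h2 := (convexOn_msq a).smul (le_of_lt (by positivity : (0:ℝ) < ε/2))
    simpa [smul_eq_mul] using h2
  · -- C1
    apply ContDiff.add contDiff_G
    have h1 : ContDiff ℝ 1 (fun x : E2 => (max (x 0 - a) 0)^2) := (contDiff_q a).comp hproj
    exact contDiff_const.mul h1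
  · -- gradient at 0
    have h1 : HasFDerivAt (fun x : E2 => F ‖x‖ + (ε/2) * (max (x 0 - a) 0)^2) (0 : E2 →L[ℝ] ℝ) 0 := by
      have hG : HasFDerivAt (fun y : E2 => F ‖y‖) (D 0) 0 := hasFDerivAt_G 0
      have hD0 : D (0:E2) = 0 := by simp [D]
      rw [hD0] at hG
      have hH : HasFDerivAt (fun x : E2 => (ε/2) * (max (x 0 - a) 0)^2) (0 : E2 →L[ℝ] ℝ) 0 := by
        have hev : (fun x : E2 => (ε/2) * (max (x 0 - a) 0)^2) =ᶠ[𝓝 (0:E2)] fun _ => (0:ℝ) := by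
          filter_upwards [Metric.ball_mem_nhds (0:E2) ha] with y hy
          rw [Metric.mem_ball, dist_zero_right] at hy
          have : y 0 - a < 0 := by linarith [abs_apply_le_norm y, (abs_le.1 (le_refl |y 0|)).2, le_abs_self (y 0)]
          rw [max_eq_right this.le]
          norm_num
        exact (hasFDerivAt_const (0:ℝ) (0:E2)).congr_of_eventuallyEq hev
      have := hG.add hH
      rw [add_zero] at this
      exact this
    have h2 : HasGradientAt (fun x : E2 => F ‖x‖ + (ε/2) * (max (x 0 - a) 0)^2) (0 : E2) 0 := by
      rw [hasGradientAt_iff_hasFDerivAt]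
      simpa using h1
    exact h2.gradient
  · -- unique minimizer
    intro x hx
    have h0 : max ((0:E2) 0 - a) 0 = 0 := by
      have : (0:E2) 0 = 0 := rfl
      rw [this, max_eq_right (by linarith)]
    have hn0 : ‖(0:E2)‖ = 0 := norm_zero
    simp only [hn0, h0, F_zero]
    have h1 : 0 < F ‖x‖ := F_pos (norm_pos_iff.2 hx)
    have h2 : 0 ≤ (ε/2) * (max (x 0 - a) 0)^2 := by positivity
    norm_num
    nlinarith
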